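/- Let d ≥ 1 be an integer, I ⊆ ℝ a bounded open interval, and λ : I → ℂ^d an absolutely continuous curve (each component absolutely continuous). Then for almost every x ∈ I — indeed for every x ∈ I at which λ is differentiable — the metric speed of the curve of unordered tuples exists and satisfies lim_{h→0} 𝐝([λ(x+h)],[λ(x)])/|h| = (1/√d) ‖λ'(x)‖_2. -/

import Mathlib

open MeasureTheory Filter Topology

/-- Normalized Euclidean distance `(1/√d)‖z − w‖₂` on `ℂ^d`. -/
noncomputable def e2dist {d : ℕ} (z w : Fin d → ℂ) : ℝ :=
  (Real.sqrt d)⁻¹ * Real.sqrt (∑ i, ‖z i - w i‖ ^ 2)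

/-- The distance `𝐝([z],[w])` between unordered `d`-tuples. -/
noncomputable def ddist {d : ℕ} (z w : Fin d → ℂ) : ℝ :=
  ⨅ σ : Equiv.Perm (Fin d), e2dist z (fun i => w (σ i))

section aux

variable {E : Type*} [NormedAddCommGroup E] [NormedSpace ℝ E] [CompleteSpace E]

lemma avg_bound (G : ℝ → E) (hG : Integrable G volume) (x a b : ℝ) (hab : a < b) :
    ‖(b - a)⁻¹ • (∫ t in a..b, G t) - G x‖ ≤ ⨍ t in Set.Icc a b, ‖G t - G x‖ := by
  have hInt : IntervalIntegrable G volume a b := hG.intervalIntegrable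
  have hIntc : IntervalIntegrable (fun _ : ℝ => G x) volume a b :=
    intervalIntegrable_const
  have key : (b - a)⁻¹ • (∫ t in a..b, G t) - G x
      = (b - a)⁻¹ • (∫ t in a..b, (G t - G x)) := by
    rw [intervalIntegral.integral_sub hInt hIntc, intervalIntegral.integral_const, smul_sub,
      smul_smul, inv_mul_cancel₀ (by linarith : b - a ≠ 0), one_smul]
  rw [key]
  rw [norm_smul, Real.norm_eq_abs, abs_inv, abs_of_pos (by linarith : (0:ℝ) < b - a)]
  have hb : ‖∫ t in a..b, (G t - G x)‖ ≤ ∫ t in a..b, ‖G t - G x‖ :=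
    intervalIntegral.norm_integral_le_integral_norm hab.le
  have havg : ⨍ t in Set.Icc a b, ‖G t - G x‖
      = (b - a)⁻¹ * ∫ t in a..b, ‖G t - G x‖ := by
    rw [setAverage_eq, MeasureTheory.integral_Icc_eq_integral_Ioc,
      intervalIntegral.integral_of_le hab.le, Real.volume_real_Icc_of_le hab.le,
      smul_eq_mul]
  rw [havg]
  exact mul_le_mul_of_nonneg_left hb (inv_nonneg.2 (by linarith))

lemma ae_hasDerivAt_intervalIntegral (G : ℝ → E) (hG : Integrable G volume) (c : ℝ) :
    ∀ᵐ x ∂(volume : Measure ℝ), HasDerivAt (fun y => ∫ t in c..y, G t) (G x) x := by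
  have hL : LocallyIntegrable G volume := hG.locallyIntegrable
  filter_upwards [(IsUnifLocDoublingMeasure.vitaliFamily (volume : Measure ℝ)
    1).ae_tendsto_average_norm_sub hL] with x hx
  have hFsub : ∀ y : ℝ, (∫ t in c..y, G t) - (∫ t in c..x, G t) = ∫ t in x..y, G t := by
    intro y
    rw [eq_comm, eq_sub_iff_add_eq, add_comm,
      intervalIntegral.integral_add_adjacent_intervals hG.intervalIntegrable
        hG.intervalIntegrable]
  rw [hasDerivAt_iff_tendsto_slope, ← nhdsLT_sup_nhdsGT x, tendsto_sup]
  constructor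
  · -- left limit
    have hR : Tendsto (fun y => ⨍ t in Set.Icc y x, ‖G t - G x‖) (𝓝[<] x) (𝓝 0) :=
      hx.comp (Real.tendsto_Icc_vitaliFamily_left x)
    rw [tendsto_iff_norm_sub_tendsto_zero]
    refine squeeze_zero' (Eventually.of_forall fun y => norm_nonneg _) ?_ hR
    filter_upwards [self_mem_nhdsWithin] with y (hy : y < x)
    have : slope (fun y => ∫ t in c..y, G t) x y - G x
        = (x - y)⁻¹ • (∫ t in y..x, G t) - G x := by
      rw [slope_def_module, hFsub, intervalIntegral.integral_symm y x]
      congr 1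
      rw [smul_neg, ← neg_smul, ← inv_neg, neg_sub]
    rw [this]
    exact avg_bound G hG x y x hy
  · -- right limit
    have hR : Tendsto (fun y => ⨍ t in Set.Icc x y, ‖G t - G x‖) (𝓝[>] x) (𝓝 0) :=
      hx.comp (Real.tendsto_Icc_vitaliFamily_right x)
    rw [tendsto_iff_norm_sub_tendsto_zero]
    refine squeeze_zero' (Eventually.of_forall fun y => norm_nonneg _) ?_ hR
    filter_upwards [self_mem_nhdsWithin] with y (hy : x < y)
    have : slope (fun y => ∫ t in c..y, G t) x y - G x
        = (y - x)⁻¹ • (∫ t in x..y, G t) - G x := by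
      rw [slope_def_module, hFsub]
    rw [this]
    exact avg_bound G hG x x y hy

end aux

lemma e2dist_cont {d : ℕ} (w : Fin d → ℂ) :
    Continuous (fun z : Fin d → ℂ => e2dist z w) := by
  unfold e2dist
  refine continuous_const.mul (Real.continuous_sqrt.comp ?_)
  exact continuous_finset_sum _ fun i _ =>
    ((continuous_norm.comp ((continuous_apply i).sub continuous_const)).pow 2)

lemma key_tendsto (d : ℕ) (hd : 1 ≤ d) (lam : ℝ → Fin d → ℂ) (x : ℝ)
    (hx : DifferentiableAt ℝ lam x) :
    Tendsto (fun h : ℝ => ddist (lam (x + h)) (lam x) / |h|) (𝓝[≠] (0 : ℝ))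
      (𝓝 ((Real.sqrt d)⁻¹ * Real.sqrt (∑ i, ‖deriv lam x i‖ ^ 2))) := by
  have hder : HasDerivAt lam (deriv lam x) x := hx.hasDerivAt
  have hslope := hder.tendsto_slope_zero
  -- continuity of the norm-like map
  have hN : Continuous (fun v : Fin d → ℂ =>
      (Real.sqrt d)⁻¹ * Real.sqrt (∑ i, ‖v i‖ ^ 2)) := by
    refine continuous_const.mul (Real.continuous_sqrt.comp ?_)
    exact continuous_finset_sum _ fun i _ =>
      ((continuous_norm.comp (continuous_apply i)).pow 2)
  have hmain : Tendsto (fun h : ℝ => (Real.sqrt d)⁻¹ *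
      Real.sqrt (∑ i, ‖(h⁻¹ • (lam (x + h) - lam x)) i‖ ^ 2)) (𝓝[≠] (0 : ℝ))
      (𝓝 ((Real.sqrt d)⁻¹ * Real.sqrt (∑ i, ‖deriv lam x i‖ ^ 2))) :=
    (hN.tendsto _).comp hslope
  -- rewrite as e2dist / |h|
  have heq : ∀ h : ℝ, h ≠ 0 → (Real.sqrt d)⁻¹ *
      Real.sqrt (∑ i, ‖(h⁻¹ • (lam (x + h) - lam x)) i‖ ^ 2)
      = e2dist (lam (x + h)) (lam x) / |h| := by
    intro h hh
    have habs : ∀ i, ‖(h⁻¹ • (lam (x + h) - lam x)) i‖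
        = |h|⁻¹ * ‖lam (x + h) i - lam x i‖ := by
      intro i
      simp only [Pi.smul_apply, Pi.sub_apply, norm_smul,
        Real.norm_eq_abs, abs_inv]
    simp only [habs, mul_pow]
    rw [← Finset.mul_sum, Real.sqrt_mul (by positivity),
      Real.sqrt_sq (by positivity)]
    unfold e2dist
    field_simp
  have hmain2 : Tendsto (fun h : ℝ => e2dist (lam (x + h)) (lam x) / |h|) (𝓝[≠] (0 : ℝ))
      (𝓝 ((Real.sqrt d)⁻¹ * Real.sqrt (∑ i, ‖deriv lam x i‖ ^ 2))) := by
    refine hmain.congr' ?_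
    filter_upwards [self_mem_nhdsWithin] with h (hh : h ≠ 0)
    exact heq h hh
  -- now show ddist = e2dist eventually
  have hcontz : ∀ w' : Fin d → ℂ, Tendsto (fun h : ℝ => e2dist (lam (x + h)) w')
      (𝓝[≠] (0 : ℝ)) (𝓝 (e2dist (lam x) w')) := by
    intro w'
    have h1 : Tendsto (fun h : ℝ => lam (x + h)) (𝓝 (0 : ℝ)) (𝓝 (lam x)) := by
      have := hx.continuousAt
      exact this.tendsto.comp (by
        have : Tendsto (fun h : ℝ => x + h) (𝓝 0) (𝓝 (x + 0)) :=
          (continuous_const.add continuous_id).tendsto 0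
        simpa using this)
    exact ((e2dist_cont w').tendsto _).comp (h1.mono_left nhdsWithin_le_nhds)
  have hself : e2dist (lam x) (lam x) = 0 := by
    simp [e2dist]
  have hP : ∀ σ : Equiv.Perm (Fin d), ∀ᶠ h : ℝ in 𝓝[≠] (0 : ℝ),
      e2dist (lam (x + h)) (lam x) ≤ e2dist (lam (x + h)) (fun i => lam x (σ i)) := by
    intro σ
    by_cases hcase : ∀ i, lam x (σ i) = lam x i
    · refine Eventually.of_forall fun h => le_of_eq ?_
      simp only [e2dist, hcase]
    · push_neg at hcase
      obtain ⟨i, hi⟩ := hcase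
      have hpos : 0 < e2dist (lam x) (fun j => lam x (σ j)) := by
        show 0 < (Real.sqrt d)⁻¹ * Real.sqrt (∑ j, ‖lam x j - lam x (σ j)‖ ^ 2)
        have hd0 : (0:ℝ) < Real.sqrt d := Real.sqrt_pos.2 (by exact_mod_cast hd)
        refine mul_pos (inv_pos.2 hd0) (Real.sqrt_pos.2 ?_)
        have hterm : 0 < ‖lam x i - lam x (σ i)‖ ^ 2 := by
          have hne : lam x i - lam x (σ i) ≠ 0 := sub_ne_zero.2 (Ne.symm hi)
          exact pow_pos (norm_pos_iff.2 hne) 2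
        refine lt_of_lt_of_le hterm ?_
        exact Finset.single_le_sum
          (f := fun j => ‖lam x j - lam x (σ j)‖ ^ 2)
          (fun j _ => by positivity) (Finset.mem_univ i)
      have h0 : Tendsto (fun h : ℝ => e2dist (lam (x + h)) (lam x)) (𝓝[≠] (0:ℝ)) (𝓝 0) := by
        have := hcontz (lam x)
        rwa [hself] at this
      have hσ := hcontz (fun i => lam x (σ i))
      exact (h0.eventually_lt hσ hpos).mono fun h hh => hh.le
  have hdd : ∀ᶠ h : ℝ in 𝓝[≠] (0 : ℝ),
      ddist (lam (x + h)) (lam x) = e2dist (lam (x + h)) (lam x) := by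
    filter_upwards [eventually_all.2 hP] with h hh
    refine le_antisymm ?_ (le_ciInf fun σ => hh σ)
    have := ciInf_le (Finite.bddBelow_range
      (fun σ : Equiv.Perm (Fin d) => e2dist (lam (x + h)) (fun i => lam x (σ i))))
      (1 : Equiv.Perm (Fin d))
    simpa [ddist] using this
  refine hmain2.congr' ?_
  filter_upwards [hdd] with h hh
  rw [hh]

theorem stmt19 (d : ℕ) (hd : 1 ≤ d) (α β : ℝ) (hαβ : α < β)
    (lam : ℝ → Fin d → ℂ)
    (hAC : ∃ g : ℝ → Fin d → ℂ, IntegrableOn g (Set.Ioo α β) ∧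
      ∀ x ∈ Set.Ioo α β, ∀ y ∈ Set.Ioo α β, lam y - lam x = ∫ t in x..y, g t) :
    (∀ x ∈ Set.Ioo α β, DifferentiableAt ℝ lam x →
      Tendsto (fun h : ℝ => ddist (lam (x + h)) (lam x) / |h|) (𝓝[≠] (0 : ℝ))
        (𝓝 ((Real.sqrt d)⁻¹ * Real.sqrt (∑ i, ‖deriv lam x i‖ ^ 2)))) ∧
    (∀ᵐ x ∂(volume.restrict (Set.Ioo α β)),
      Tendsto (fun h : ℝ => ddist (lam (x + h)) (lam x) / |h|) (𝓝[≠] (0 : ℝ))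
        (𝓝 ((Real.sqrt d)⁻¹ * Real.sqrt (∑ i, ‖deriv lam x i‖ ^ 2)))) := by
  obtain ⟨g, hg_int, hg⟩ := hAC
  constructor
  · intro x _ hx
    exact key_tendsto d hd lam x hx
  · -- a.e. differentiability
    set G : ℝ → Fin d → ℂ := Set.indicator (Set.Ioo α β) g with hGdef
    have hGint : Integrable G volume := by
      rw [hGdef, integrable_indicator_iff measurableSet_Ioo]
      exact hg_int
    set x0 : ℝ := (α + β) / 2 with hx0def
    have hx0 : x0 ∈ Set.Ioo α β := ⟨by simp [hx0def]; linarith, by simp [hx0def]; linarith⟩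
    have hdiff := ae_hasDerivAt_intervalIntegral G hGint x0
    have hae : ∀ᵐ x ∂(volume.restrict (Set.Ioo α β)), DifferentiableAt ℝ lam x := by
      filter_upwards [ae_restrict_of_ae hdiff, self_mem_ae_restrict measurableSet_Ioo]
        with x hxF hxmem
      have heq : lam =ᶠ[𝓝 x] fun y => lam x0 + ∫ t in x0..y, G t := by
        filter_upwards [isOpen_Ioo.mem_nhds hxmem] with y hy
        have h2 : (∫ t in x0..y, g t) = ∫ t in x0..y, G t :=
          intervalIntegral.integral_congr fun t ht =>
            (Set.indicator_of_mem (Set.ordConnected_Ioo.uIcc_subset hx0 hy ht) g).symm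
        have h1 : lam y - lam x0 = ∫ t in x0..y, G t := (hg x0 hx0 y hy).trans h2
        calc lam y = lam x0 + (lam y - lam x0) := by abel
          _ = lam x0 + ∫ t in x0..y, G t := by rw [h1]
      have : DifferentiableAt ℝ (fun y => lam x0 + ∫ t in x0..y, G t) x :=
        (differentiableAt_const _).add hxF.differentiableAt
      exact this.congr_of_eventuallyEq heq
    filter_upwards [hae] with x hx
    exact key_tendsto d hd lam x hx
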